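/- Let n ≥ 2 be an integer, let α be any real number, let λ₁, …, λₙ be positive real numbers, and let σ₁, …, σₙ be real numbers with Σ_{i=1}^n σᵢ = 1. Define τᵢ = σᵢ − α for i = 1, …, n−1 and τₙ = σₙ − 1 + (n−1)α. Then the quantity Q := Σ_{i=1}^n σᵢ² + 2 Σ_{i=1}^{n-1} λₙ λᵢ⁻¹ σᵢ² − 4α λₙ [ Σ_{i=1}^n λᵢ⁻¹ σᵢ + ((nα−1) λₙ⁻¹ − α Σ_{i=1}^n λᵢ⁻¹) Σ_{i=1}^n σᵢ ] (Σ_{i=1}^n σᵢ) − 2α² λₙ (Σ_{i=1}^n λᵢ⁻¹)(Σ_{i=1}^n σᵢ)² + (2nα² + (n−1)α − 1)(Σ_{i=1}^n σᵢ)² satisfies the identity Q = (n/(n−1)) (τₙ + ((n−1)/n)(1 − (n+2)α))² + Σ_{i=1}^{n-1} (τᵢ + τₙ/(n−1))² + 2 Σ_{i=1}^{n-1} λₙ λᵢ⁻¹ τᵢ² + ((n−1)/n)(1 − 2α)((n+2)α − 1). -/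

import Mathlib

open Finset

/-- The quantity `Q` from Lemma 3.1 of Brendle-Choi-Daskalopoulos,
indexed so that sums run over `i ∈ {1, …, n}` and `λₙ = lam n`. -/
noncomputable def Q (n : ℕ) (α : ℝ) (lam σ : ℕ → ℝ) : ℝ :=
  (∑ i ∈ Icc 1 n, (σ i) ^ 2)
    + 2 * ∑ i ∈ Icc 1 (n - 1), lam n * (lam i)⁻¹ * (σ i) ^ 2
    - 4 * α * lam n *
        ((∑ i ∈ Icc 1 n, (lam i)⁻¹ * σ i)
          + (((n : ℝ) * α - 1) * (lam n)⁻¹ - α * ∑ i ∈ Icc 1 n, (lam i)⁻¹)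
            * ∑ i ∈ Icc 1 n, σ i)
        * (∑ i ∈ Icc 1 n, σ i)
    - 2 * α ^ 2 * lam n * (∑ i ∈ Icc 1 n, (lam i)⁻¹) * (∑ i ∈ Icc 1 n, σ i) ^ 2
    + (2 * (n : ℝ) * α ^ 2 + ((n : ℝ) - 1) * α - 1) * (∑ i ∈ Icc 1 n, σ i) ^ 2

/-- Final identity in the proof of Lemma 3.1: with `∑ σᵢ = 1`,
`τᵢ = σᵢ − α` for `i < n`, and `τₙ = σₙ − 1 + (n−1)α`, one has
`Q = (n/(n−1))(τₙ + ((n−1)/n)(1 − (n+2)α))² + ∑_{i<n} (τᵢ + τₙ/(n−1))²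
      + 2 ∑_{i<n} λₙ λᵢ⁻¹ τᵢ² + ((n−1)/n)(1 − 2α)((n+2)α − 1)`. -/
theorem Q_identity_sum_of_squares (n : ℕ) (hn : 2 ≤ n) (α : ℝ)
    (lam σ τ : ℕ → ℝ) (hpos : ∀ i ∈ Icc 1 n, 0 < lam i)
    (hσ : ∑ i ∈ Icc 1 n, σ i = 1)
    (hτ : ∀ i ∈ Icc 1 (n - 1), τ i = σ i - α)
    (hτn : τ n = σ n - 1 + ((n : ℝ) - 1) * α) :
    Q n α lam σ
      = ((n : ℝ) / ((n : ℝ) - 1))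
          * (τ n + (((n : ℝ) - 1) / (n : ℝ)) * (1 - ((n : ℝ) + 2) * α)) ^ 2
        + (∑ i ∈ Icc 1 (n - 1), (τ i + τ n / ((n : ℝ) - 1)) ^ 2)
        + 2 * ∑ i ∈ Icc 1 (n - 1), lam n * (lam i)⁻¹ * (τ i) ^ 2
        + (((n : ℝ) - 1) / (n : ℝ)) * (1 - 2 * α) * (((n : ℝ) + 2) * α - 1) := by
  obtain ⟨m, rfl⟩ : ∃ m, n = m + 1 := ⟨n - 1, by omega⟩
  have hm : 1 ≤ m := by omega
  simp only [Nat.add_sub_cancel] at hτ ⊢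
  have hmem : (m + 1) ∈ Icc 1 (m + 1) := by simp
  have hL : lam (m + 1) ≠ 0 := (hpos _ hmem).ne'
  have hsplit : ∀ f : ℕ → ℝ,
      ∑ i ∈ Icc 1 (m + 1), f i = (∑ i ∈ Icc 1 m, f i) + f (m + 1) :=
    fun f => Finset.sum_Icc_succ_top (by omega) f
  set A := ∑ i ∈ Icc 1 m, τ i with hA
  set B := ∑ i ∈ Icc 1 m, (τ i) ^ 2 with hB
  set C := ∑ i ∈ Icc 1 m, (lam i)⁻¹ with hC
  set D := ∑ i ∈ Icc 1 m, (lam i)⁻¹ * τ i with hD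
  set E := ∑ i ∈ Icc 1 m, lam (m + 1) * (lam i)⁻¹ * (τ i) ^ 2 with hE
  have hcard : ((Icc 1 m).card : ℝ) = (m : ℝ) := by
    rw [Nat.card_Icc]; push_cast; ring
  have h1 : ∑ i ∈ Icc 1 m, σ i = A + (m : ℝ) * α := by
    have : ∀ i ∈ Icc 1 m, σ i = τ i + α := fun i hi => by rw [hτ i hi]; ring
    rw [Finset.sum_congr rfl this, Finset.sum_add_distrib, Finset.sum_const,
      nsmul_eq_mul, hcard]
  have h2 : ∑ i ∈ Icc 1 m, (σ i) ^ 2 = B + 2 * α * A + (m : ℝ) * α ^ 2 := by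
    have : ∀ i ∈ Icc 1 m, (σ i) ^ 2 = (τ i) ^ 2 + 2 * α * τ i + α ^ 2 :=
      fun i hi => by rw [hτ i hi]; ring
    rw [Finset.sum_congr rfl this, Finset.sum_add_distrib, Finset.sum_add_distrib,
      Finset.sum_const, nsmul_eq_mul, hcard, ← Finset.mul_sum]
  have h3 : ∑ i ∈ Icc 1 m, (lam i)⁻¹ * σ i = D + α * C := by
    have : ∀ i ∈ Icc 1 m, (lam i)⁻¹ * σ i = (lam i)⁻¹ * τ i + α * (lam i)⁻¹ :=
      fun i hi => by rw [hτ i hi]; ring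
    rw [Finset.sum_congr rfl this, Finset.sum_add_distrib, ← Finset.mul_sum]
  have h4 : ∑ i ∈ Icc 1 m, lam (m + 1) * (lam i)⁻¹ * (σ i) ^ 2
      = E + 2 * α * lam (m + 1) * D + α ^ 2 * lam (m + 1) * C := by
    have : ∀ i ∈ Icc 1 m, lam (m + 1) * (lam i)⁻¹ * (σ i) ^ 2
        = lam (m + 1) * (lam i)⁻¹ * (τ i) ^ 2
          + (2 * α * lam (m + 1)) * ((lam i)⁻¹ * τ i)
          + (α ^ 2 * lam (m + 1)) * (lam i)⁻¹ :=
      fun i hi => by rw [hτ i hi]; ring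
    rw [Finset.sum_congr rfl this, Finset.sum_add_distrib, Finset.sum_add_distrib,
      ← Finset.mul_sum, ← Finset.mul_sum]
  have hσn : σ (m + 1) = τ (m + 1) + 1 - (m : ℝ) * α := by
    rw [hτn]; push_cast; ring
  have hm0 : (m : ℝ) ≠ 0 := by positivity
  have hm1 : (m : ℝ) + 1 ≠ 0 := by positivity
  have hAt : A = -τ (m + 1) := by
    rw [hsplit, h1, hσn] at hσ; linarith
  have h5 : ∑ i ∈ Icc 1 m, (τ i + τ (m + 1) / ((m : ℝ) + 1 - 1)) ^ 2
      = B + 2 * (τ (m + 1) / (m : ℝ)) * A + (m : ℝ) * (τ (m + 1) / (m : ℝ)) ^ 2 := by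
    have : ∀ i ∈ Icc 1 m, (τ i + τ (m + 1) / ((m : ℝ) + 1 - 1)) ^ 2
        = (τ i) ^ 2 + (2 * (τ (m + 1) / (m : ℝ))) * τ i + (τ (m + 1) / (m : ℝ)) ^ 2 :=
      fun i hi => by ring_nf
    rw [Finset.sum_congr rfl this, Finset.sum_add_distrib, Finset.sum_add_distrib,
      Finset.sum_const, nsmul_eq_mul, hcard, ← Finset.mul_sum]
  rw [Q]
  push_cast
  rw [hsplit (fun i => (σ i) ^ 2), hsplit (fun i => (lam i)⁻¹ * σ i),
    hsplit (fun i => (lam i)⁻¹), hsplit σ, h1, h2, h3, h4, h5, hσn, hAt]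
  field_simp
  rw [show (∑ x ∈ Icc 1 m, 1 / lam x) = C by rw [hC]; simp only [one_div]]
  simp only [add_sub_cancel_right]
  field_simp
  ring
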